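/- Let S ≤ M n be a submodule and let w ∈ (Fin n → Fin 4 → ZMod 2) be such that every block of w has even parity (Σ_{i : Fin 4} w j i = 0 for all j). Then w ∈ Ĉ(S) if and only if the extracted pair vector u(w) ∈ M n, defined by u(w) j = (w j 0 + w j 2, w j 0 + w j 1), lies in S. -/
import Mathlib


/-- Binary symplectic representation of `n`-qubit Pauli operators (up to phase). -/
abbrev M (n : ℕ) : Type := Fin n → ZMod 2 × ZMod 2

/-- The symplectic form: two Paulis commute iff it vanishes. -/
def symp {n : ℕ} (u v : M n) : ZMod 2 :=
  ∑ j, ((u j).1 * (v j).2 + (u j).2 * (v j).1)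

/-- The inner `[[4,2,2]]` encoding of one qubit-pair symplectic entry. -/
def Emap (p : ZMod 2 × ZMod 2) : Fin 4 → ZMod 2 := ![p.1 + p.2, p.1, p.2, 0]

/-- Blockwise `[[4,2,2]]` encoding. -/
def Ehat {n : ℕ} (v : M n) : Fin n → Fin 4 → ZMod 2 := fun j => Emap (v j)

/-- The indicator vector of block `j` (the inner `XXXX`/`ZZZZ` stabilizer). -/
def beta {n : ℕ} (j : Fin n) : Fin n → Fin 4 → ZMod 2 :=
  fun j' _ => if j' = j then 1 else 0

/-- The concatenated binary code `Ĉ(S)`. -/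
def Chat {n : ℕ} (S : Submodule (ZMod 2) (M n)) :
    Submodule (ZMod 2) (Fin n → Fin 4 → ZMod 2) :=
  Submodule.span (ZMod 2) (Set.range (beta (n := n)) ∪ Ehat '' (S : Set (M n)))

/-- The standard dot product on the concatenated space. -/
def dotB {n : ℕ} (w w' : Fin n → Fin 4 → ZMod 2) : ZMod 2 :=
  ∑ j, ∑ i, w j i * w' j i

/-- The pair vector extracted from an even-parity block vector. -/
def uOf {n : ℕ} (w : Fin n → Fin 4 → ZMod 2) : M n :=
  fun j => (w j 0 + w j 2, w j 0 + w j 1)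

/-- `uOf` as a linear map. -/
def uLin (n : ℕ) : (Fin n → Fin 4 → ZMod 2) →ₗ[ZMod 2] M n where
  toFun := uOf
  map_add' w w' := by
    funext j
    simp only [uOf, Pi.add_apply, Prod.mk_add_mk]
    exact Prod.ext (by ring) (by ring)
  map_smul' c w := by
    funext j
    simp only [uOf, Pi.smul_apply, smul_eq_mul, RingHom.id_apply, Prod.smul_mk]
    exact Prod.ext (by ring) (by ring)

lemma decomp {n : ℕ} (w : Fin n → Fin 4 → ZMod 2) (hw : ∀ j, ∑ i, w j i = 0) :
    w = Ehat (uOf w) + ∑ j, (w j 3) • beta j := by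
  have key : ∀ a b c d : ZMod 2, a + b + c + d = 0 →
      a = (a + c) + (a + b) + d ∧ b = (a + c) + d ∧ c = (a + b) + d ∧ d = 0 + d := by
    decide
  funext j i
  have h := hw j
  rw [Fin.sum_univ_four] at h
  have hsum : (∑ k, (w k 3) • beta k) j i = w j 3 := by
    simp [beta, Finset.sum_apply, mul_ite]
  have hk := key (w j 0) (w j 1) (w j 2) (w j 3) h
  simp only [Pi.add_apply]
  rw [hsum]
  fin_cases i
  · exact hk.1.trans (by simp [Ehat, Emap, uOf])
  · exact hk.2.1.trans (by simp [Ehat, Emap, uOf])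
  · exact hk.2.2.1.trans (by simp [Ehat, Emap, uOf])
  · exact hk.2.2.2.trans (by simp [Ehat, Emap, uOf])

theorem stmt5 (n : ℕ) (S : Submodule (ZMod 2) (M n)) (w : Fin n → Fin 4 → ZMod 2)
    (hw : ∀ j, ∑ i, w j i = 0) :
    w ∈ Chat S ↔ uOf w ∈ S := by
  constructor
  · intro hmem
    have hle : Chat S ≤ S.comap (uLin n) := by
      rw [Chat, Submodule.span_le]
      rintro x (⟨j, rfl⟩ | ⟨v, hv, rfl⟩)
      · show uOf (beta j) ∈ S
        have h0 : uOf (beta j) = 0 := by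
          funext k
          simp only [uOf, beta]
          have h2 : ∀ b : ZMod 2, (b + b, b + b) = (0 : ZMod 2 × ZMod 2) := by decide
          exact h2 _
        rw [h0]; exact S.zero_mem
      · show uOf (Ehat v) ∈ S
        have h0 : uOf (Ehat v) = v := by
          funext k
          simp only [uOf, Ehat, Emap]
          have h2 : ∀ p : ZMod 2 × ZMod 2,
              (p.1 + p.2 + p.2, p.1 + p.2 + p.1) = p := by decide
          simpa using h2 (v k)
        rw [h0]; exact hv
    exact hle hmem
  · intro hu
    rw [decomp w hw]
    exact Submodule.add_mem _
      (Submodule.subset_span (Or.inr ⟨_, hu, rfl⟩))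
      (Submodule.sum_mem _ fun j _ => Submodule.smul_mem _ _
        (Submodule.subset_span (Or.inl ⟨j, rfl⟩)))
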